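/- Fix p ∈ (1,∞) and z > 1. Any global minimizer (f̂₁, f̂₂) of G_z over ℝ² satisfies f̂₁ ∈ [0,1] and f̂₂ ∈ [0,1]. (In particular, even though one reviewer gives paper 1 the score z > 1, its aggregate score is at most 1.) -/

import Mathlib

/-- The `L(p,1)` loss of the aggregate scores `(f₁, f₂)` for two papers whose three
reviewers give overall recommendations `(z, 0, 0)` and `(0, 1, 0)` respectively. -/
noncomputable def G (p z : ℝ) (f : ℝ × ℝ) : ℝ :=
  (|z - f.1| ^ p + |f.2| ^ p) ^ (1 / p) +
    (|f.1| ^ p + |1 - f.2| ^ p) ^ (1 / p) +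
    (|f.1| ^ p + |f.2| ^ p) ^ (1 / p)

private lemma rpow_one_div_pow {p : ℝ} (hp : 0 < p) {B : ℝ} (hB : 0 ≤ B) :
    (B ^ (1 / p)) ^ p = B := by
  rw [← Real.rpow_mul hB, one_div_mul_cancel hp.ne', Real.rpow_one]

/-- Strict monotonicity in the second slot. -/
private lemma term_lt_right {p : ℝ} (hp : 0 < p) {u v v' : ℝ} (hv : |v'| < |v|) :
    (|u| ^ p + |v'| ^ p) ^ (1 / p) < (|u| ^ p + |v|^ p) ^ (1 / p) := by
  have h : |v'| ^ p < |v| ^ p := Real.rpow_lt_rpow (abs_nonneg _) hv hp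
  apply Real.rpow_lt_rpow (by positivity) (by linarith) (by positivity)

/-- Strict monotonicity in the first slot. -/
private lemma term_lt_left {p : ℝ} (hp : 0 < p) {u u' v : ℝ} (hu : |u'| < |u|) :
    (|u'| ^ p + |v| ^ p) ^ (1 / p) < (|u| ^ p + |v|^ p) ^ (1 / p) := by
  have h : |u'| ^ p < |u| ^ p := Real.rpow_lt_rpow (abs_nonneg _) hu hp
  apply Real.rpow_lt_rpow (by positivity) (by linarith) (by positivity)

/-- Lipschitz bound (from Minkowski's inequality). -/
private lemma lip {p : ℝ} (hp : 1 < p) (x y : ℝ) {B : ℝ} (hB : 0 ≤ B) :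
    (|x| ^ p + B) ^ (1 / p) ≤ (|y| ^ p + B) ^ (1 / p) + |x - y| := by
  have hp0 : 0 < p := lt_trans one_pos hp
  have H := Real.Lp_add_le (Finset.univ : Finset (Fin 2)) ![x - y, 0] ![y, B ^ (1 / p)] hp.le
  simp only [Fin.sum_univ_two, Matrix.cons_val_zero, Matrix.cons_val_one, Matrix.head_cons,
    Pi.add_apply, sub_add_cancel, zero_add, abs_zero] at H
  rw [abs_of_nonneg (Real.rpow_nonneg hB _), rpow_one_div_pow hp0 hB,
    Real.zero_rpow hp0.ne', add_zero, ← Real.rpow_mul (abs_nonneg (x - y)),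
    mul_one_div_cancel hp0.ne', Real.rpow_one] at H
  linarith [H]

/-- Key Hölder-based estimate: for `a > 1` and `0 ≤ c ≤ 1`,
`(aᵖ + c)^{1/p}` exceeds `(1 + c)^{1/p}` by more than `(a-1)/2`. -/
private lemma holder_key {p : ℝ} (hp : 1 < p) {a c : ℝ} (ha : 1 < a)
    (hc0 : 0 ≤ c) (hc1 : c ≤ 1) :
    (1 + c) ^ (1 / p) + (a - 1) / 2 < (a ^ p + c) ^ (1 / p) := by
  have hp0 : 0 < p := lt_trans one_pos hp
  set q : ℝ := p.conjExponent with hq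
  have hpq : p.HolderConjugate q := Real.HolderConjugate.conjExponent hp
  have hq1 : 1 < q := hpq.symm.lt
  have hq0 : 0 < q := lt_trans one_pos hq1
  have ha0 : 0 < a := lt_trans one_pos ha
  have hsum : 1 / p + 1 / q = 1 := by
    rw [one_div, one_div]; exact hpq.inv_add_inv_eq_one
  have H := Real.inner_le_Lp_mul_Lq (Finset.univ : Finset (Fin 2))
    ![a, c ^ (1 / p)] ![1, c ^ (1 / q)] hpq
  simp only [Fin.sum_univ_two, Matrix.cons_val_zero, Matrix.cons_val_one, Matrix.head_cons,
    mul_one, abs_one, Real.one_rpow, one_mul] at H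
  rw [abs_of_nonneg (Real.rpow_nonneg hc0 _), abs_of_nonneg (Real.rpow_nonneg hc0 _),
    rpow_one_div_pow hp0 hc0, rpow_one_div_pow hq0 hc0, abs_of_pos ha0] at H
  have hcc : c ^ (1 / p) * c ^ (1 / q) = c := by
    rw [← Real.rpow_add' hc0 (by rw [hsum]; norm_num), hsum, Real.rpow_one]
  rw [hcc] at H
  -- H : a + c ≤ (a ^ p + c) ^ (1/p) * (1 + c) ^ (1/q)
  have hT : (0 : ℝ) < 1 + c := by linarith
  have hTq0 : (0 : ℝ) < (1 + c) ^ (1 / q) := Real.rpow_pos_of_pos hT _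
  have hTq2 : (1 + c) ^ (1 / q) < 2 := by
    calc (1 + c) ^ (1 / q) ≤ (2 : ℝ) ^ (1 / q) :=
          Real.rpow_le_rpow hT.le (by linarith) (by positivity)
      _ < (2 : ℝ) ^ (1 : ℝ) :=
          Real.rpow_lt_rpow_of_exponent_lt one_lt_two ((div_lt_one hq0).mpr hq1)
      _ = 2 := Real.rpow_one 2
  have hTpq : (1 + c) ^ (1 / p) * (1 + c) ^ (1 / q) = 1 + c := by
    rw [← Real.rpow_add hT, hsum, Real.rpow_one]
  have hdiv : (1 + c) ^ (1 / p) + (a - 1) / ((1 + c) ^ (1 / q)) ≤ (a ^ p + c) ^ (1 / p) := by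
    rw [← sub_nonneg]
    have expand : (a ^ p + c) ^ (1 / p) - ((1 + c) ^ (1 / p) + (a - 1) / ((1 + c) ^ (1 / q)))
        = ((a ^ p + c) ^ (1 / p) * (1 + c) ^ (1 / q) - (a + c)) / ((1 + c) ^ (1 / q)) := by
      field_simp
      nlinarith [hTpq]
    rw [expand]
    apply div_nonneg (by linarith) hTq0.le
  have hfrac : (a - 1) / 2 < (a - 1) / ((1 + c) ^ (1 / q)) :=
    div_lt_div_of_pos_left (by linarith) hTq0 hTq2
  linarith

/-- For `p ∈ (1,∞)` and `z > 1`, any global minimizer `(f̂₁, f̂₂)` of `G_z` over `ℝ²`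
satisfies `f̂₁ ∈ [0,1]` and `f̂₂ ∈ [0,1]`. -/
theorem stmt_2 (p : ℝ) (hp : 1 < p) (z : ℝ) (hz : 1 < z) (fhat : ℝ × ℝ)
    (hmin : ∀ f : ℝ × ℝ, G p z fhat ≤ G p z f) :
    fhat.1 ∈ Set.Icc (0 : ℝ) 1 ∧ fhat.2 ∈ Set.Icc (0 : ℝ) 1 := by
  obtain ⟨a, b⟩ := fhat
  simp only [Set.mem_Icc]
  have hp0 : 0 < p := lt_trans one_pos hp
  have hz0 : 0 < z := lt_trans one_pos hz
  -- Step 1: b ≥ 0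
  have hb0 : 0 ≤ b := by
    by_contra h
    push_neg at h
    have hlt : G p z (a, 0) < G p z (a, b) := by
      have h1 : |(0 : ℝ)| < |b| := by rw [abs_zero, abs_of_neg h]; linarith
      have h2 : |1 - (0 : ℝ)| < |1 - b| := by
        rw [sub_zero, abs_one, abs_of_pos (by linarith)]; linarith
      exact add_lt_add (add_lt_add (term_lt_right hp0 h1) (term_lt_right hp0 h2))
        (term_lt_right hp0 h1)
    exact absurd (hmin (a, 0)) (not_le.mpr hlt)
  -- Step 2: b ≤ 1
  have hb1 : b ≤ 1 := by
    by_contra h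
    push_neg at h
    have hlt : G p z (a, 1) < G p z (a, b) := by
      have h1 : |(1 : ℝ)| < |b| := by rw [abs_one, abs_of_pos (by linarith)]; linarith
      have h2 : |1 - (1 : ℝ)| < |1 - b| := by
        rw [sub_self, abs_zero, abs_of_neg (by linarith : 1 - b < 0)]; linarith
      exact add_lt_add (add_lt_add (term_lt_right hp0 h1) (term_lt_right hp0 h2))
        (term_lt_right hp0 h1)
    exact absurd (hmin (a, 1)) (not_le.mpr hlt)
  -- Step 3: a ≥ 0
  have ha0 : 0 ≤ a := by
    by_contra h
    push_neg at h
    have hlt : G p z (0, b) < G p z (a, b) := by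
      have h1 : |z - 0| < |z - a| := by
        rw [sub_zero, abs_of_pos hz0, abs_of_pos (by linarith : 0 < z - a)]; linarith
      have h2 : |(0 : ℝ)| < |a| := by rw [abs_zero, abs_of_neg h]; linarith
      exact add_lt_add (add_lt_add (term_lt_left hp0 h1) (term_lt_left hp0 h2))
        (term_lt_left hp0 h2)
    exact absurd (hmin (0, b)) (not_le.mpr hlt)
  -- Step 4: a ≤ 1
  have ha1 : a ≤ 1 := by
    by_contra h
    push_neg at h
    -- abbreviations
    have hB0 : 0 ≤ |b| ^ p := Real.rpow_nonneg (abs_nonneg _) _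
    have hC1 : |1 - b| ^ p ≤ 1 := by
      calc |1 - b| ^ p ≤ 1 ^ p :=
            Real.rpow_le_rpow (abs_nonneg _) (abs_le.mpr ⟨by linarith, by linarith⟩) hp0.le
        _ = 1 := Real.one_rpow p
    have hD1 : |b| ^ p ≤ 1 := by
      calc |b| ^ p ≤ 1 ^ p :=
            Real.rpow_le_rpow (abs_nonneg _) (abs_le.mpr ⟨by linarith, by linarith⟩) hp0.le
        _ = 1 := Real.one_rpow p
    have hC0 : 0 ≤ |1 - b| ^ p := Real.rpow_nonneg (abs_nonneg _) _
    -- term 1 : increase at most (a - 1)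
    have hterm1 : (|z - 1| ^ p + |b| ^ p) ^ (1 / p)
        ≤ (|z - a| ^ p + |b| ^ p) ^ (1 / p) + (a - 1) := by
      have := lip hp (z - 1) (z - a) hB0
      have habs : |z - 1 - (z - a)| = a - 1 := by
        rw [show z - 1 - (z - a) = a - 1 by ring, abs_of_pos (by linarith)]
      rw [habs] at this
      exact this
    -- terms 2, 3 : each decreases by more than (a - 1) / 2
    have hterm2 : (|(1 : ℝ)| ^ p + |1 - b| ^ p) ^ (1 / p) + (a - 1) / 2
        < (|a| ^ p + |1 - b| ^ p) ^ (1 / p) := by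
      have := holder_key hp h hC0 hC1
      rwa [abs_one, Real.one_rpow, abs_of_pos (by linarith : (0 : ℝ) < a)]
    have hterm3 : (|(1 : ℝ)| ^ p + |b| ^ p) ^ (1 / p) + (a - 1) / 2
        < (|a| ^ p + |b| ^ p) ^ (1 / p) := by
      have := holder_key hp h hB0 hD1
      rwa [abs_one, Real.one_rpow, abs_of_pos (by linarith : (0 : ℝ) < a)]
    have hlt : G p z (1, b) < G p z (a, b) := by
      simp only [G]
      linarith
    exact absurd (hmin (1, b)) (not_le.mpr hlt)
  exact ⟨⟨ha0, ha1⟩, ⟨hb0, hb1⟩⟩
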